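/- Let π ∈ S_n with n ≥ 2. Suppose that in the one-line notation of π the values 1 and n occur in adjacent positions (|π⁻¹(1) − π⁻¹(n)| = 1), with π(1) ≠ n and π(n) ≠ 1. Then the domination number of G_π is 2 and {1, n} is a minimum dominating set of G_π. -/

import Mathlib

/-- The permutation graph of `π`: vertices `0,…,n-1` (0-indexed version of `1,…,n`),
with `i < j` adjacent iff `π⁻¹ i > π⁻¹ j`. -/
def permGraph {n : ℕ} (π : Equiv.Perm (Fin n)) : SimpleGraph (Fin n) where
  Adj i j := (i < j ∧ π.symm j < π.symm i) ∨ (j < i ∧ π.symm i < π.symm j)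
  symm := ⟨by intro i j h; tauto⟩
  loopless := ⟨by intro i h; rcases h with ⟨h, _⟩ | ⟨h, _⟩ <;> exact lt_irrefl i h⟩

/-- `D` dominates `G`: every vertex is in `D` or adjacent to an element of `D`. -/
def Dominates {V : Type*} (G : SimpleGraph V) (D : Set V) : Prop :=
  ∀ v, v ∈ D ∨ ∃ d ∈ D, G.Adj v d

/-- The domination number: minimum cardinality of a dominating set. -/
noncomputable def domNumber {V : Type*} [Fintype V] (G : SimpleGraph V) : ℕ :=
  sInf {k | ∃ D : Finset V, D.card = k ∧ Dominates G ↑D}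

/-- Closed neighborhood `N[x]`. -/
def closedNbhd {V : Type*} (G : SimpleGraph V) (x : V) : Set V :=
  {y | y = x ∨ G.Adj x y}

/-- Degree of a vertex. -/
noncomputable def deg {V : Type*} (G : SimpleGraph V) (v : V) : ℕ :=
  (G.neighborSet v).ncard

theorem one_adjacent_to_n_dominating {n : ℕ} (hn : 2 ≤ n) (π : Equiv.Perm (Fin n))
    (hpos : ((π.symm ⟨0, by omega⟩ : ℤ) - (π.symm ⟨n - 1, by omega⟩ : ℤ)).natAbs = 1)
    (h1 : π ⟨0, by omega⟩ ≠ ⟨n - 1, by omega⟩)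
    (h2 : π ⟨n - 1, by omega⟩ ≠ ⟨0, by omega⟩) :
    domNumber (permGraph π) = 2 ∧
      Dominates (permGraph π) {(⟨0, by omega⟩ : Fin n), ⟨n - 1, by omega⟩} := by
  set z : Fin n := ⟨0, by omega⟩ with hz
  set m : Fin n := ⟨n - 1, by omega⟩ with hm
  have hzm : z ≠ m := by
    intro h
    have := congrArg Fin.val h
    simp [hz, hm] at this
    omega
  have habs : ((π.symm z : Fin n) : ℕ) = ((π.symm m : Fin n) : ℕ) + 1 ∨
      ((π.symm m : Fin n) : ℕ) = ((π.symm z : Fin n) : ℕ) + 1 := by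
    have := hpos; omega
  -- domination
  have hdom : Dominates (permGraph π) {z, m} := by
    intro v
    by_cases hvz : v = z
    · left; left; exact hvz
    by_cases hvm : v = m
    · left; right; exact hvm
    right
    have hne1 : ((π.symm v : Fin n) : ℕ) ≠ ((π.symm z : Fin n) : ℕ) := by
      intro h; exact hvz (π.symm.injective (Fin.ext h))
    have hne2 : ((π.symm v : Fin n) : ℕ) ≠ ((π.symm m : Fin n) : ℕ) := by
      intro h; exact hvm (π.symm.injective (Fin.ext h))
    have hv0 : (v : ℕ) ≠ 0 := fun h => hvz (Fin.ext h)
    have hvn : (v : ℕ) ≠ n - 1 := fun h => hvm (Fin.ext h)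
    have hvlt : (v : ℕ) < n := v.isLt
    by_cases hcase : ((π.symm v : Fin n) : ℕ) < ((π.symm z : Fin n) : ℕ)
    · exact ⟨z, by simp, Or.inr ⟨Fin.lt_def.mpr (by simp [hz]; omega),
        Fin.lt_def.mpr (by omega)⟩⟩
    · exact ⟨m, by simp, Or.inl ⟨Fin.lt_def.mpr (by simp [hm]; omega),
        Fin.lt_def.mpr (by omega)⟩⟩
  refine ⟨?_, hdom⟩
  have hmem : (2 : ℕ) ∈ {k | ∃ D : Finset (Fin n), D.card = k ∧ Dominates (permGraph π) ↑D} := by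
    refine ⟨{z, m}, ?_, ?_⟩
    · rw [Finset.card_insert_of_notMem (by simpa using hzm), Finset.card_singleton]
    · simpa using hdom
  apply le_antisymm
  · exact Nat.sInf_le hmem
  · apply le_csInf ⟨2, hmem⟩
    rintro k ⟨D, hcard, hD⟩
    by_contra hk
    push_neg at hk
    interval_cases k
    · have hDe : D = ∅ := Finset.card_eq_zero.mp hcard
      rcases hD z with h | ⟨d, hd, _⟩
      · simp [hDe] at h
      · simp [hDe] at hd
    · obtain ⟨d, hDd⟩ := Finset.card_eq_one.mp hcard
      subst hDd
      -- d dominates every other vertex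
      have hadj : ∀ v : Fin n, v ≠ d → (permGraph π).Adj v d := by
        intro v hv
        rcases hD v with h | ⟨d', hd', hadj⟩
        · simp at h; exact absurd h hv
        · simp at hd'; rwa [hd'] at hadj
      by_cases hdz : d = z
      · -- then π m = z needed
        subst hdz
        have := hadj (π m) (by intro h; exact h2 h)
        rcases this with ⟨hlt, hs⟩ | ⟨hlt, hs⟩
        ·
          rw [Equiv.symm_apply_apply] at hs
          -- symm d < m impossible? no. hlt : π m < z = 0: impossible
          have := Fin.lt_def.mp hlt
          simp [hz] at this
        · rw [Equiv.symm_apply_apply] at hs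
          have := Fin.lt_def.mp hs
          have hle : ((π.symm z : Fin n) : ℕ) < n := (π.symm z).isLt
          simp [hm] at this
          omega
      by_cases hdm : d = m
      · subst hdm
        have := hadj (π z) (by intro h; exact h1 h)
        rcases this with ⟨hlt, hs⟩ | ⟨hlt, hs⟩
        · rw [Equiv.symm_apply_apply] at hs
          have h3 := Fin.lt_def.mp hs
          simp [hz] at h3
        · have h3 := Fin.lt_def.mp hlt
          have := (π z).isLt
          simp [hm] at h3
          omega
      · -- d strictly between: contradiction with |symm z - symm m| = 1
        have hz' := hadj z (fun h => hdz h.symm)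
        have hm' := hadj m (fun h => hdm h.symm)
        have hdlt : (d : ℕ) < n := d.isLt
        have hd0 : (d : ℕ) ≠ 0 := fun h => hdz (Fin.ext (by simp [hz, h]))
        have hdn : (d : ℕ) ≠ n - 1 := fun h => hdm (Fin.ext (by simp [hm, h]))
        rcases hz' with ⟨_, hs1⟩ | ⟨hlt, _⟩
        · rcases hm' with ⟨hlt2, _⟩ | ⟨_, hs2⟩
          · have := Fin.lt_def.mp hlt2; simp [hm] at this; omega
          · have a1 := Fin.lt_def.mp hs1
            have a2 := Fin.lt_def.mp hs2
            omega
        · have := Fin.lt_def.mp hlt; simp [hz] at this
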